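/- Let S = UΛUᵀ with UᵀU = I_m and ρ > 0. Then (2⁻¹S⊗I_p + 2⁻¹I_p⊗S + ρI_{p²})·{−ρ⁻¹I_p⊗(UΛ₂Uᵀ)} = −(2ρ)⁻¹I_p⊗(UΛUᵀ) − (2ρ)⁻¹(U⊗U)(Λ⊗Λ₂)(Uᵀ⊗Uᵀ). -/

import Mathlib

open Matrix Kronecker

/-- With `S = U Λ Uᵀ`, `Uᵀ U = I_m`, `ρ > 0`,
`(2⁻¹ S⊗I + 2⁻¹ I⊗S + ρI)·{−ρ⁻¹ I⊗(UΛ₂Uᵀ)}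
 = −(2ρ)⁻¹ I⊗(UΛUᵀ) − (2ρ)⁻¹ (U⊗U)(Λ⊗Λ₂)(Uᵀ⊗Uᵀ)`. -/
theorem stmt_8 (p m : ℕ) (hp : 0 < p) (hm : 0 < m)
    (U : Matrix (Fin p) (Fin m) ℝ) (hU : Uᵀ * U = 1)
    (τ : Fin m → ℝ) (hτ : ∀ i, 0 ≤ τ i)
    (Λ : Matrix (Fin m) (Fin m) ℝ) (hΛ : Λ = Matrix.diagonal τ)
    (S : Matrix (Fin p) (Fin p) ℝ) (hS : S = U * Λ * Uᵀ)
    (ρ : ℝ) (hρ : 0 < ρ)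
    (Λ₂ : Matrix (Fin m) (Fin m) ℝ)
    (hΛ₂ : Λ₂ = Matrix.diagonal (fun i => τ i / (τ i + 2 * ρ))) :
    ((2⁻¹ : ℝ) • (S ⊗ₖ (1 : Matrix (Fin p) (Fin p) ℝ))
        + (2⁻¹ : ℝ) • ((1 : Matrix (Fin p) (Fin p) ℝ) ⊗ₖ S)
        + ρ • (1 : Matrix (Fin p × Fin p) (Fin p × Fin p) ℝ))
      * (-(ρ⁻¹ • ((1 : Matrix (Fin p) (Fin p) ℝ) ⊗ₖ (U * Λ₂ * Uᵀ))))
    = -((2 * ρ)⁻¹ • ((1 : Matrix (Fin p) (Fin p) ℝ) ⊗ₖ (U * Λ * Uᵀ)))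
      - (2 * ρ)⁻¹ • ((U ⊗ₖ U) * (Λ ⊗ₖ Λ₂) * (Uᵀ ⊗ₖ Uᵀ)) := by
  set A : Matrix (Fin p) (Fin p) ℝ := U * Λ₂ * Uᵀ with hA
  have hSA : S * A = U * (Λ * Λ₂) * Uᵀ := by
    rw [hS, hA]
    simp only [Matrix.mul_assoc]
    rw [← Matrix.mul_assoc Uᵀ U, hU, Matrix.one_mul]
  have hkey : (2⁻¹ : ℝ) • (Λ * Λ₂) + ρ • Λ₂ = (2⁻¹ : ℝ) • Λ := by
    rw [hΛ, hΛ₂, diagonal_mul_diagonal]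
    ext i j
    have hpos : τ i + 2 * ρ ≠ 0 := ne_of_gt (by have := hτ i; linarith)
    rcases eq_or_ne i j with h | h
    · subst h
      simp only [Matrix.add_apply, Matrix.smul_apply, diagonal_apply_eq,
        smul_eq_mul]
      field_simp
    · simp [diagonal_apply_ne _ h]
  have h1 : ((2⁻¹ : ℝ) • (S ⊗ₖ (1 : Matrix (Fin p) (Fin p) ℝ)))
      * ((1 : Matrix (Fin p) (Fin p) ℝ) ⊗ₖ A) = (2⁻¹ : ℝ) • (S ⊗ₖ A) := by
    rw [smul_mul_assoc, ← mul_kronecker_mul, mul_one, one_mul]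
  have h2 : ((2⁻¹ : ℝ) • ((1 : Matrix (Fin p) (Fin p) ℝ) ⊗ₖ S))
      * ((1 : Matrix (Fin p) (Fin p) ℝ) ⊗ₖ A)
      = (2⁻¹ : ℝ) • ((1 : Matrix (Fin p) (Fin p) ℝ) ⊗ₖ (S * A)) := by
    rw [smul_mul_assoc, ← mul_kronecker_mul, mul_one]
  have h3 : (ρ • (1 : Matrix (Fin p × Fin p) (Fin p × Fin p) ℝ))
      * ((1 : Matrix (Fin p) (Fin p) ℝ) ⊗ₖ A)
      = ρ • ((1 : Matrix (Fin p) (Fin p) ℝ) ⊗ₖ A) := by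
    rw [smul_mul_assoc, one_mul]
  have hcomb : (2⁻¹ : ℝ) • ((1 : Matrix (Fin p) (Fin p) ℝ) ⊗ₖ (S * A))
      + ρ • ((1 : Matrix (Fin p) (Fin p) ℝ) ⊗ₖ A)
      = (2⁻¹ : ℝ) • ((1 : Matrix (Fin p) (Fin p) ℝ) ⊗ₖ (U * Λ * Uᵀ)) := by
    rw [hSA, hA, ← kronecker_smul, ← kronecker_smul, ← kronecker_add,
      ← kronecker_smul]
    refine congrArg (fun X => (1 : Matrix (Fin p) (Fin p) ℝ) ⊗ₖ X) ?_
    calc (2⁻¹ : ℝ) • (U * (Λ * Λ₂) * Uᵀ) + ρ • (U * Λ₂ * Uᵀ)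
        = U * ((2⁻¹ : ℝ) • (Λ * Λ₂) + ρ • Λ₂) * Uᵀ := by
          simp [Matrix.mul_add, Matrix.add_mul, Matrix.mul_smul, Matrix.smul_mul]
      _ = (2⁻¹ : ℝ) • (U * Λ * Uᵀ) := by
          rw [hkey]; simp [Matrix.mul_smul, Matrix.smul_mul]
  have hSAk : S ⊗ₖ A = (U ⊗ₖ U) * (Λ ⊗ₖ Λ₂) * (Uᵀ ⊗ₖ Uᵀ) := by
    rw [hS, hA, ← mul_kronecker_mul, ← mul_kronecker_mul]
  rw [mul_neg, mul_smul_comm, add_mul, add_mul, h1, h2, h3, add_assoc, hcomb,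
    hSAk]
  have h2ρ : (2 * ρ)⁻¹ = ρ⁻¹ * 2⁻¹ := by
    rw [mul_inv]; ring
  rw [h2ρ]
  rw [smul_add, smul_smul, smul_smul, neg_add, mul_comm (ρ⁻¹) (2⁻¹ : ℝ)]
  abel
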